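/- SDP form of Uhlmann's theorem: Let Y and Z be finite-dimensional complex vector spaces, let u, v ∈ Y⊗Z, and let P = Tr_Y(u u*) and Q = Tr_Y(v v*). Then F(P, Q)² = max{⟨v v*, W⟩ : W ∈ Pos(Y⊗Z), Tr_Y(W) ≤ P}, where F(P,Q) = Tr√(√P Q √P) is the fidelity, ⟨A,B⟩ = Tr(A*B), and ≤ is the Loewner order. -/

import Mathlib

set_option linter.unusedSectionVars false


open Matrix
open scoped Kronecker ComplexOrder

noncomputable section

/-- The square root of a positive semidefinite matrix, as defined in the older Mathlib
(`Matrix.PosSemidef.sqrt`, since removed). -/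
def Matrix.PosSemidef.sqrt {n 𝕜 : Type*} [Fintype n] [DecidableEq n] [RCLike 𝕜]
    {A : Matrix n n 𝕜} (hA : A.PosSemidef) : Matrix n n 𝕜 :=
  (hA.1.eigenvectorUnitary : Matrix n n 𝕜) *
    diagonal (fun i => ((√(hA.1.eigenvalues i) : ℝ) : 𝕜)) *
    (star hA.1.eigenvectorUnitary : Matrix n n 𝕜)

/-- The trace norm `‖A‖₁ = Tr √(A* A)`. -/
def traceNorm {m n : Type*} [Fintype m] [Fintype n] [DecidableEq n]
    (A : Matrix m n ℂ) : ℝ :=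
  (Matrix.posSemidef_conjTranspose_mul_self A).sqrt.trace.re

/-- The spectral norm (operator norm w.r.t. Euclidean norms). -/
def specNorm {m n : Type*} [Fintype m] [Fintype n] [DecidableEq n]
    (A : Matrix m n ℂ) : ℝ :=
  ‖LinearMap.toContinuousLinearMap (Matrix.toEuclideanLin A)‖

/-- The Frobenius norm `‖A‖₂ = √Tr(A*A)`. -/
def frobeniusNorm {m n : Type*} [Fintype m] [Fintype n] (A : Matrix m n ℂ) : ℝ :=
  Real.sqrt ((Aᴴ * A).trace.re)

/-- Partial trace over the first tensor factor. -/
def ptraceFst {y z : Type*} [Fintype y] (M : Matrix (y × z) (y × z) ℂ) : Matrix z z ℂ :=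
  Matrix.of fun a b => ∑ i, M (i, a) (i, b)

/-- Partial trace over the second tensor factor. -/
def ptraceSnd {y z : Type*} [Fintype z] (M : Matrix (y × z) (y × z) ℂ) : Matrix y y ℂ :=
  Matrix.of fun i j => ∑ a, M (i, a) (j, a)

/-- The super-operator `Φ ⊗ 1_{L(W)}`, for `Φ : L(X) → L(Y)` and `W` indexed by `k`. -/
def tensorId {n m : Type*} [Fintype n] [Fintype m] (k : Type*) [Fintype k]
    (Φ : Matrix n n ℂ →ₗ[ℂ] Matrix m m ℂ) :
    Matrix (n × k) (n × k) ℂ →ₗ[ℂ] Matrix (m × k) (m × k) ℂ where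
  toFun M := Matrix.of fun p q => Φ (Matrix.of fun i j => M (i, p.2) (j, q.2)) p.1 q.1
  map_add' M N := by
    ext p q
    show Φ (Matrix.of fun i j => (M + N) (i, p.2) (j, q.2)) p.1 q.1 =
      Φ (Matrix.of fun i j => M (i, p.2) (j, q.2)) p.1 q.1 +
        Φ (Matrix.of fun i j => N (i, p.2) (j, q.2)) p.1 q.1
    have h : (Matrix.of fun i j => (M + N) (i, p.2) (j, q.2)) =
        (Matrix.of fun i j => M (i, p.2) (j, q.2)) +
          (Matrix.of fun i j => N (i, p.2) (j, q.2)) := rfl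
    rw [h, map_add]; rfl
  map_smul' c M := by
    ext p q
    show Φ (Matrix.of fun i j => (c • M) (i, p.2) (j, q.2)) p.1 q.1 =
      (c • Φ (Matrix.of fun i j => M (i, p.2) (j, q.2))) p.1 q.1
    have h : (Matrix.of fun i j => (c • M) (i, p.2) (j, q.2)) =
        c • (Matrix.of fun i j => M (i, p.2) (j, q.2)) := rfl
    rw [h, _root_.map_smul]

/-- The trace norm induced on super-operators. -/
def inducedTraceNorm {a b : Type*} [Fintype a] [DecidableEq a] [Fintype b] [DecidableEq b]
    (Φ : Matrix a a ℂ →ₗ[ℂ] Matrix b b ℂ) : ℝ :=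
  sSup {x : ℝ | ∃ X : Matrix a a ℂ, traceNorm X ≤ 1 ∧ x = traceNorm (Φ X)}

/-- The completely bounded trace norm (diamond norm):
`sup over k ≥ 1 of ‖Φ ⊗ 1_{L(ℂᵏ)}‖₁`. -/
def diamondNorm {n m : Type*} [Fintype n] [DecidableEq n] [Fintype m] [DecidableEq m]
    (Φ : Matrix n n ℂ →ₗ[ℂ] Matrix m m ℂ) : ℝ :=
  ⨆ k : ℕ, inducedTraceNorm (tensorId (Fin (k + 1)) Φ)


/-- Choi–Jamiołkowski representation `J(Φ) = Σ_{i,j} Φ(E_{i,j}) ⊗ E_{i,j}`. -/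
def choi {n m : Type*} [Fintype n] [DecidableEq n] [Fintype m]
    (Φ : Matrix n n ℂ →ₗ[ℂ] Matrix m m ℂ) : Matrix (m × n) (m × n) ℂ :=
  ∑ i : n, ∑ j : n, (Φ (Matrix.single i j 1)) ⊗ₖ (Matrix.single i j 1)

/-- A quantum channel: a completely positive and trace-preserving super-operator. -/
def IsQuantumChannel {n m : Type*} [Fintype n] [Fintype m]
    (Φ : Matrix n n ℂ →ₗ[ℂ] Matrix m m ℂ) : Prop :=
  (∀ (k : ℕ) (P : Matrix (n × Fin k) (n × Fin k) ℂ), P.PosSemidef →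
      (tensorId (Fin k) Φ P).PosSemidef) ∧
    ∀ X : Matrix n n ℂ, (Φ X).trace = X.trace

open Classical in
/-- Square root of a positive semidefinite matrix (junk value `0` otherwise). -/
def matSqrt {r : Type*} [Fintype r] [DecidableEq r] (P : Matrix r r ℂ) : Matrix r r ℂ :=
  if h : P.PosSemidef then h.sqrt else 0

/-- The fidelity `F(P,Q) = ‖√P √Q‖₁`. -/
def fidelity {r : Type*} [Fintype r] [DecidableEq r] (P Q : Matrix r r ℂ) : ℝ :=
  traceNorm (matSqrt P * matSqrt Q)

namespace Uhlmann

variable {n : Type*} [Fintype n] [DecidableEq n]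

/-- Functional calculus for a Hermitian matrix. -/
def fc {A : Matrix n n ℂ} (hA : A.IsHermitian) (f : ℝ → ℝ) : Matrix n n ℂ :=
  (Matrix.IsHermitian.eigenvectorUnitary hA : Matrix n n ℂ) *
    diagonal (RCLike.ofReal ∘ f ∘ hA.eigenvalues) *
    (star (Matrix.IsHermitian.eigenvectorUnitary hA : Matrix n n ℂ))

variable {A : Matrix n n ℂ} (hA : A.IsHermitian)

lemma fc_mul_fc (f g : ℝ → ℝ) : fc hA f * fc hA g = fc hA (fun x => f x * g x) := by
  unfold fc
  have h1 : (star (Matrix.IsHermitian.eigenvectorUnitary hA : Matrix n n ℂ)) *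
      (Matrix.IsHermitian.eigenvectorUnitary hA : Matrix n n ℂ) = 1 :=
    Matrix.UnitaryGroup.star_mul_self _
  have h2 : (fun i => (RCLike.ofReal ∘ f ∘ hA.eigenvalues) i *
      (RCLike.ofReal ∘ g ∘ hA.eigenvalues) i : n → ℂ) =
      (RCLike.ofReal ∘ (fun x => f x * g x) ∘ hA.eigenvalues) := by
    funext i; simp [Function.comp]
  simp only [Matrix.mul_assoc]
  rw [← Matrix.mul_assoc (star _) (_ : Matrix n n ℂ), h1, Matrix.one_mul,
    ← Matrix.mul_assoc (diagonal _) (diagonal _), diagonal_mul_diagonal, h2]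

lemma fc_id : fc hA (fun x => x) = A := (Matrix.IsHermitian.spectral_theorem hA).symm

lemma fc_one : fc hA (fun _ => 1) = 1 := by
  unfold fc
  have h1 : (Matrix.IsHermitian.eigenvectorUnitary hA : Matrix n n ℂ) *
      (star (Matrix.IsHermitian.eigenvectorUnitary hA : Matrix n n ℂ)) = 1 :=
    Matrix.mem_unitaryGroup_iff.mp (Matrix.IsHermitian.eigenvectorUnitary hA).2
  have h2 : (RCLike.ofReal ∘ (fun _ : ℝ => (1:ℝ)) ∘ hA.eigenvalues : n → ℂ) =
      fun _ => 1 := by funext i; simp [Function.comp]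
  rw [h2, diagonal_one, Matrix.mul_one, h1]

lemma fc_sub (f g : ℝ → ℝ) : fc hA f - fc hA g = fc hA (fun x => f x - g x) := by
  unfold fc
  have h2 : (fun i => (RCLike.ofReal ∘ f ∘ hA.eigenvalues) i -
      (RCLike.ofReal ∘ g ∘ hA.eigenvalues) i : n → ℂ) =
      (RCLike.ofReal ∘ (fun x => f x - g x) ∘ hA.eigenvalues) := by
    funext i; simp [Function.comp]
  rw [← Matrix.sub_mul, ← Matrix.mul_sub, diagonal_sub, h2]

lemma fc_conjTranspose (f : ℝ → ℝ) : (fc hA f)ᴴ = fc hA f := by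
  unfold fc
  have h2 : (star (RCLike.ofReal ∘ f ∘ hA.eigenvalues) : n → ℂ) =
      (RCLike.ofReal ∘ f ∘ hA.eigenvalues) := by
    funext i; simp [Function.comp, Pi.star_def, Complex.conj_ofReal]
  rw [conjTranspose_mul, conjTranspose_mul, diagonal_conjTranspose, h2]
  simp only [Matrix.star_eq_conjTranspose, conjTranspose_conjTranspose, Matrix.mul_assoc]

lemma fc_isHermitian (f : ℝ → ℝ) : (fc hA f).IsHermitian := fc_conjTranspose hA f

lemma fc_posSemidef {f : ℝ → ℝ} (hf : ∀ i, 0 ≤ f (hA.eigenvalues i)) :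
    (fc hA f).PosSemidef := by
  unfold fc
  exact (Matrix.posSemidef_diagonal_iff.2 (fun i => by
    simpa using Complex.zero_le_real.2 (hf i))).mul_mul_conjTranspose_same _

lemma fc_congr {f g : ℝ → ℝ} (h : ∀ i, f (hA.eigenvalues i) = g (hA.eigenvalues i)) :
    fc hA f = fc hA g := by
  unfold fc
  have h2 : (RCLike.ofReal ∘ f ∘ hA.eigenvalues : n → ℂ) =
      (RCLike.ofReal ∘ g ∘ hA.eigenvalues) := by
    funext i; simp [Function.comp, h i]
  rw [h2]

lemma fc_trace (f : ℝ → ℝ) : (fc hA f).trace = ∑ i, (f (hA.eigenvalues i) : ℂ) := by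
  unfold fc
  rw [Matrix.trace_mul_cycle, Matrix.UnitaryGroup.star_mul_self, Matrix.one_mul,
    Matrix.trace_diagonal]
  rfl

lemma fc_sqrt_eq {A : Matrix n n ℂ} (hA : A.PosSemidef) : hA.sqrt = fc hA.1 Real.sqrt := rfl

end Uhlmann

namespace Matrix.PosSemidef

variable {n : Type*} [Fintype n] [DecidableEq n]

lemma posSemidef_sqrt {A : Matrix n n ℂ} (hA : A.PosSemidef) : hA.sqrt.PosSemidef :=
  Uhlmann.fc_posSemidef hA.1 (fun _ => Real.sqrt_nonneg _)

lemma sqrt_mul_self {A : Matrix n n ℂ} (hA : A.PosSemidef) : hA.sqrt * hA.sqrt = A := by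
  rw [Uhlmann.fc_sqrt_eq, Uhlmann.fc_mul_fc,
    Uhlmann.fc_congr hA.1 (g := fun x => x)
      (fun i => Real.mul_self_sqrt (hA.eigenvalues_nonneg i)), Uhlmann.fc_id]

open scoped MatrixOrder in
lemma eq_sqrt_of_sq_eq {A B : Matrix n n ℂ} (hA : A.PosSemidef) (hB : B.PosSemidef)
    (h : A ^ 2 = B) : A = hB.sqrt :=
  (CFC.mul_self_eq_mul_self_iff A hB.sqrt hA.nonneg hB.posSemidef_sqrt.nonneg).1
    (by rw [← pow_two, h, hB.sqrt_mul_self])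

end Matrix.PosSemidef

namespace Uhlmann

variable {n : Type*} [Fintype n] [DecidableEq n]

/-- `x ↦ x⁻¹` with junk `0`. -/
def pinvFun (x : ℝ) : ℝ := if x = 0 then 0 else x⁻¹

/-- indicator of the support. -/
def indFun (x : ℝ) : ℝ := if x = 0 then 0 else 1

lemma trace_re_nonneg {A : Matrix n n ℂ} (hA : A.PosSemidef) : 0 ≤ A.trace.re := by
  have h : ∀ i, 0 ≤ (A i i).re := fun i => by
    have h0 : 0 ≤ A i i := hA.diag_nonneg
    exact (Complex.le_def.1 h0).1
  rw [Matrix.trace]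
  simp only [Complex.re_sum]
  exact Finset.sum_nonneg fun i _ => h i

lemma trace_im_zero {A : Matrix n n ℂ} (hA : A.IsHermitian) : A.trace.im = 0 := by
  have h := Matrix.trace_conjTranspose A
  rw [hA.eq] at h
  exact Complex.conj_eq_iff_im.1 h.symm

lemma trace_mul_psd_re_nonneg {A B : Matrix n n ℂ} (hA : A.PosSemidef) (hB : B.PosSemidef) :
    0 ≤ (A * B).trace.re := by
  have hS := hA.posSemidef_sqrt
  have h1 : A * B = hA.sqrt * (hA.sqrt * B) := by
    rw [← Matrix.mul_assoc, hA.sqrt_mul_self]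
  have h2 : (A * B).trace = (hA.sqrt * B * hA.sqrt).trace := by
    rw [h1, Matrix.trace_mul_comm hA.sqrt (hA.sqrt * B), Matrix.mul_assoc]
  rw [h2]
  refine trace_re_nonneg ?_
  have := hB.conjTranspose_mul_mul_same hA.sqrt
  rwa [hS.1.eq] at this

end Uhlmann

set_option linter.unusedSectionVars false

namespace Uhlmann

variable {n : Type*} [Fintype n] [DecidableEq n]

lemma fc_zero {A : Matrix n n ℂ} (hA : A.IsHermitian) : fc hA (fun _ => 0) = 0 := by
  unfold fc
  have h2 : (RCLike.ofReal ∘ (fun _ : ℝ => (0:ℝ)) ∘ hA.eigenvalues : n → ℂ) = fun _ => 0 := by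
    funext i; simp [Function.comp]
  rw [h2, diagonal_zero, Matrix.mul_zero, Matrix.zero_mul]

section Polar

variable {k : Type*} [Fintype k]
variable {H : Matrix n n ℂ} {X : Matrix k n ℂ}

lemma H_mul_H (hH : H.PosSemidef) : H * H = fc hH.1 (fun x => x * x) := by
  have h := fc_mul_fc hH.1 (fun x => x) (fun x => x)
  rwa [fc_id hH.1] at h

lemma fc_pinv_mul_H (hH : H.PosSemidef) : fc hH.1 pinvFun * H = fc hH.1 indFun := by
  have h := fc_mul_fc hH.1 pinvFun (fun x => x)
  rw [fc_id hH.1] at h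
  rw [h]
  exact fc_congr _ (fun i => by
    by_cases h : hH.1.eigenvalues i = 0 <;> simp [pinvFun, indFun, h])

lemma X_mul_ind (hH : H.PosSemidef) (hX : Xᴴ * X = H * H) : X * fc hH.1 indFun = X := by
  have hsub : fc hH.1 indFun - 1 = fc hH.1 (fun x => indFun x - 1) := by
    have h := fc_sub hH.1 indFun (fun _ => 1)
    rwa [fc_one hH.1] at h
  have h0 : Xᴴ * X * (fc hH.1 indFun - 1) = 0 := by
    rw [hX, H_mul_H hH, hsub, fc_mul_fc]
    rw [show fc hH.1 (fun x => x * x * (indFun x - 1)) = fc hH.1 (fun _ => 0) from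
      fc_congr _ (fun i => by by_cases h : hH.1.eigenvalues i = 0 <;> simp [indFun, h]),
      fc_zero]
  have h1 := (Matrix.conjTranspose_mul_self_mul_eq_zero X (fc hH.1 indFun - 1)).1 h0
  rw [Matrix.mul_sub, Matrix.mul_one, sub_eq_zero] at h1
  exact h1

/-- The polar partial isometry of `X`, relative to `H = √(XᴴX)`. -/
def polarIso (hH : H.PosSemidef) (X : Matrix k n ℂ) : Matrix k n ℂ := X * fc hH.1 pinvFun

lemma polarIso_mul_H (hH : H.PosSemidef) (hX : Xᴴ * X = H * H) : polarIso hH X * H = X := by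
  rw [polarIso, Matrix.mul_assoc, fc_pinv_mul_H hH, X_mul_ind hH hX]

lemma polarIso_conjTranspose_mul_self (hH : H.PosSemidef) (hX : Xᴴ * X = H * H) :
    (polarIso hH X)ᴴ * polarIso hH X = fc hH.1 indFun := by
  rw [polarIso, conjTranspose_mul, fc_conjTranspose, Matrix.mul_assoc,
    ← Matrix.mul_assoc Xᴴ X _, hX, H_mul_H hH]
  rw [fc_mul_fc, fc_mul_fc]
  exact fc_congr _ (fun i => by
    by_cases h : hH.1.eigenvalues i = 0
    · simp [pinvFun, indFun, h]
    · simp only [pinvFun, indFun, h, if_false]; field_simp)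

lemma polarIso_conjTranspose_mul_X (hH : H.PosSemidef) (hX : Xᴴ * X = H * H) :
    (polarIso hH X)ᴴ * X = H := by
  rw [polarIso, conjTranspose_mul, fc_conjTranspose, Matrix.mul_assoc, hX, H_mul_H hH]
  rw [fc_mul_fc]
  rw [show fc hH.1 (fun x => pinvFun x * (x * x)) = fc hH.1 (fun x => x) from
    fc_congr _ (fun i => by
      by_cases h : hH.1.eigenvalues i = 0
      · simp [pinvFun, h]
      · simp only [pinvFun, h, if_false]; field_simp),
    fc_id hH.1]

lemma fc_ind_le_one (hH : H.PosSemidef) : (1 - fc hH.1 indFun).PosSemidef := by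
  have hsub : (1 : Matrix n n ℂ) - fc hH.1 indFun = fc hH.1 (fun x => 1 - indFun x) := by
    have h := fc_sub hH.1 (fun _ => 1) indFun
    rwa [fc_one hH.1] at h
  rw [hsub]
  exact fc_posSemidef _ (fun i => by by_cases h : hH.1.eigenvalues i = 0 <;> simp [indFun, h])

lemma H_mul_ind (hH : H.PosSemidef) : H * fc hH.1 indFun = H := by
  have h := fc_mul_fc hH.1 (fun x => x) indFun
  rw [fc_id hH.1] at h
  rw [h, show fc hH.1 (fun x => x * indFun x) = fc hH.1 (fun x => x) from
    fc_congr _ (fun i => by by_cases h : hH.1.eigenvalues i = 0 <;> simp [indFun, h]),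
    fc_id hH.1]

lemma ind_mul_H (hH : H.PosSemidef) : fc hH.1 indFun * H = H := by
  have h := fc_mul_fc hH.1 indFun (fun x => x)
  rw [fc_id hH.1] at h
  rw [h, show fc hH.1 (fun x => indFun x * x) = fc hH.1 (fun x => x) from
    fc_congr _ (fun i => by by_cases h : hH.1.eigenvalues i = 0 <;> simp [indFun, h]),
    fc_id hH.1]

end Polar

lemma psd_le_one_of_sq_le {B : Matrix n n ℂ} (hB : B.PosSemidef)
    (h : (B - B * B).PosSemidef) : (1 - B).PosSemidef := by
  have heig : ∀ i, hB.1.eigenvalues i ≤ 1 := by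
    intro i
    by_contra hgt
    push_neg at hgt
    set lam := hB.1.eigenvalues i with hlam
    set x : n → ℂ := ⇑(hB.1.eigenvectorBasis i) with hx
    have hBx : B *ᵥ x = (lam : ℂ) • x := by
      have := hB.1.mulVec_eigenvectorBasis i
      rw [← hx] at this
      rw [this]
      ext j
      simp [Complex.real_smul, hlam]
    have hxx : dotProduct (star x) x = 1 := by
      have hn := hB.1.eigenvectorBasis.orthonormal.1 i
      have h1 : (inner (𝕜 := ℂ) (hB.1.eigenvectorBasis i) (hB.1.eigenvectorBasis i)) = (1:ℂ) := by
        rw [inner_self_eq_norm_sq_to_K, hn]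
        norm_num
      rw [dotProduct_comm]; exact h1
    have hq := h.dotProduct_mulVec_nonneg x
    have hmv : (B - B * B) *ᵥ x = ((lam - lam ^ 2 : ℝ) : ℂ) • x := by
      rw [Matrix.sub_mulVec, ← Matrix.mulVec_mulVec, hBx, Matrix.mulVec_smul, hBx]
      ext j
      simp [Pi.smul_apply]
      ring
    rw [hmv] at hq
    have : dotProduct (star x) (((lam - lam ^ 2 : ℝ) : ℂ) • x)
        = ((lam - lam ^ 2 : ℝ) : ℂ) := by
      rw [dotProduct_smul, hxx, smul_eq_mul, mul_one]
    rw [this] at hq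
    have h2 : (0:ℝ) ≤ lam - lam ^ 2 := by
      have := (Complex.le_def.1 hq).1
      simpa [← Complex.ofReal_pow] using this
    nlinarith
  have h1 := fc_sub hB.1 (fun _ => 1) (fun x => x)
  rw [fc_one hB.1, fc_id hB.1] at h1
  rw [h1]
  exact fc_posSemidef _ (fun i => by linarith [heig i])

lemma contract_flip {k : Type*} [Fintype k] [DecidableEq k] {Ω : Matrix k n ℂ}
    (h : ((1 : Matrix n n ℂ) - Ωᴴ * Ω).PosSemidef) :
    ((1 : Matrix k k ℂ) - Ω * Ωᴴ).PosSemidef := by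
  have hB : (Ω * Ωᴴ).PosSemidef := posSemidef_self_mul_conjTranspose Ω
  refine psd_le_one_of_sq_le hB ?_
  have h2 : Ω * Ωᴴ - (Ω * Ωᴴ) * (Ω * Ωᴴ) = Ω * ((1 : Matrix n n ℂ) - Ωᴴ * Ω) * Ωᴴ := by
    rw [Matrix.mul_sub, Matrix.mul_one, Matrix.sub_mul]
    rw [Matrix.mul_assoc, Matrix.mul_assoc, Matrix.mul_assoc]
  rw [h2]
  exact h.mul_mul_conjTranspose_same Ω

end Uhlmann

namespace Uhlmann

lemma inner_eq_trace {k n : Type*} [Fintype k] [Fintype n] (C D : Matrix k n ℂ) :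
    (inner ℂ ((WithLp.equiv 2 ((n × k) → ℂ)).symm fun p => C p.2 p.1)
      ((WithLp.equiv 2 ((n × k) → ℂ)).symm fun p => D p.2 p.1) : ℂ) = (Cᴴ * D).trace := by
  rw [WithLp.equiv_symm_apply, EuclideanSpace.inner_toLp_toLp]
  simp only [Matrix.trace, Matrix.diag, Matrix.mul_apply, Matrix.conjTranspose_apply,
    dotProduct, Fintype.sum_prod_type, Pi.star_apply, RCLike.star_def]
  exact Finset.sum_congr rfl fun _ _ => Finset.sum_congr rfl fun _ _ => mul_comm _ _

lemma trace_cauchy_schwarz {k n : Type*} [Fintype k] [Fintype n] (A B : Matrix k n ℂ) :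
    ‖(Aᴴ * B).trace‖ ^ 2 ≤ (Aᴴ * A).trace.re * (Bᴴ * B).trace.re := by
  set a : EuclideanSpace ℂ (n × k) := (WithLp.equiv 2 ((n × k) → ℂ)).symm fun p => A p.2 p.1
  set b : EuclideanSpace ℂ (n × k) := (WithLp.equiv 2 ((n × k) → ℂ)).symm fun p => B p.2 p.1
  have hab : (inner ℂ a b : ℂ) = (Aᴴ * B).trace := inner_eq_trace A B
  have haa : (Aᴴ * A).trace.re = ‖a‖ ^ 2 := by
    rw [← inner_eq_trace A A]
    exact inner_self_eq_norm_sq (𝕜 := ℂ) a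
  have hbb : (Bᴴ * B).trace.re = ‖b‖ ^ 2 := by
    rw [← inner_eq_trace B B]
    exact inner_self_eq_norm_sq (𝕜 := ℂ) b
  have h := norm_inner_le_norm (𝕜 := ℂ) a b
  rw [hab] at h
  rw [haa, hbb]
  have habs : ‖(Aᴴ * B).trace‖ = ‖(Aᴴ * B).trace‖ := rfl
  rw [habs]
  calc ‖(Aᴴ * B).trace‖ ^ 2 ≤ (‖a‖ * ‖b‖) ^ 2 := by
        have h0 : (0:ℝ) ≤ ‖(Aᴴ * B).trace‖ := norm_nonneg _
        nlinarith
  _ = ‖a‖ ^ 2 * ‖b‖ ^ 2 := by ring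

lemma hoelder {n : Type*} [Fintype n] [DecidableEq n] {K M : Matrix n n ℂ}
    (hK : ((1 : Matrix n n ℂ) - K * Kᴴ).PosSemidef) :
    ‖(Kᴴ * M).trace‖ ≤ ((posSemidef_conjTranspose_mul_self M).sqrt).trace.re := by
  set hN := posSemidef_conjTranspose_mul_self M with hNdef
  set H := hN.sqrt with hHdef
  have hH : H.PosSemidef := hN.posSemidef_sqrt
  have hX : Mᴴ * M = H * H := hN.sqrt_mul_self.symm
  set Ω := polarIso hH M with hΩdef
  have hrec : Ω * H = M := polarIso_mul_H hH hX
  set G := fc hH.1 Real.sqrt with hGdef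
  have hGG : G * G = H := by
    rw [hGdef, fc_mul_fc, show fc hH.1 (fun x => Real.sqrt x * Real.sqrt x) =
        fc hH.1 (fun x => x) from fc_congr _ (fun i => Real.mul_self_sqrt
          (hH.eigenvalues_nonneg i)), fc_id hH.1]
  have hGherm : Gᴴ = G := fc_conjTranspose hH.1 Real.sqrt
  set A := (Kᴴ * Ω * G)ᴴ with hAdef
  have htr : (Kᴴ * M).trace = (Aᴴ * G).trace := by
    rw [hAdef, conjTranspose_conjTranspose]
    rw [show Kᴴ * Ω * G * G = Kᴴ * (Ω * (G * G)) from by simp only [Matrix.mul_assoc]]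
    rw [hGG, hrec]
  have hAA : Aᴴ * A = Kᴴ * (Ω * H * Ωᴴ) * K := by
    rw [hAdef, conjTranspose_conjTranspose, conjTranspose_mul, conjTranspose_mul, hGherm,
      conjTranspose_conjTranspose]
    rw [show Kᴴ * Ω * G * (G * (Ωᴴ * K)) = Kᴴ * (Ω * (G * G) * Ωᴴ) * K by
      simp only [Matrix.mul_assoc], hGG]
  have hPm : (Ω * H * Ωᴴ).PosSemidef := hH.mul_mul_conjTranspose_same Ω
  have htrPm : (Ω * H * Ωᴴ).trace = H.trace := by
    rw [Matrix.trace_mul_cycle, polarIso_conjTranspose_mul_self hH hX, ind_mul_H hH]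
  have hAAle : (Aᴴ * A).trace.re ≤ H.trace.re := by
    rw [hAA]
    have hcyc : (Kᴴ * (Ω * H * Ωᴴ) * K).trace = ((Ω * H * Ωᴴ) * (K * Kᴴ)).trace := by
      rw [Matrix.trace_mul_cycle Kᴴ (Ω * H * Ωᴴ) K]
      exact Matrix.trace_mul_comm _ _
    rw [hcyc]
    have hdiff : ((Ω * H * Ωᴴ) * (1 - K * Kᴴ)).trace.re ≥ 0 :=
      trace_mul_psd_re_nonneg hPm hK
    have hexp : (Ω * H * Ωᴴ) * (1 - K * Kᴴ) = (Ω * H * Ωᴴ) - (Ω * H * Ωᴴ) * (K * Kᴴ) := by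
      rw [Matrix.mul_sub, Matrix.mul_one]
    rw [hexp, Matrix.trace_sub] at hdiff
    simp only [Complex.sub_re] at hdiff
    linarith [hdiff, congrArg Complex.re htrPm]
  have hGG2 : (Gᴴ * G).trace.re = H.trace.re := by rw [hGherm, hGG]
  have hcs := trace_cauchy_schwarz A G
  rw [htr]
  have h0 : 0 ≤ H.trace.re := trace_re_nonneg hH
  have h1 : ‖(Aᴴ * G).trace‖ ^ 2 ≤ H.trace.re * H.trace.re := by
    calc ‖(Aᴴ * G).trace‖ ^ 2 ≤ (Aᴴ * A).trace.re * (Gᴴ * G).trace.re := hcs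
    _ ≤ H.trace.re * H.trace.re := by
        rw [hGG2]
        have hAA0 : 0 ≤ (Aᴴ * A).trace.re := trace_re_nonneg (posSemidef_conjTranspose_mul_self A)
        nlinarith
  nlinarith [norm_nonneg ((Aᴴ * G).trace)]

lemma trace_sqrt_swap {n : Type*} [Fintype n] [DecidableEq n] (X : Matrix n n ℂ) :
    ((posSemidef_conjTranspose_mul_self X).sqrt).trace =
      ((posSemidef_self_mul_conjTranspose X).sqrt).trace := by
  set hN := posSemidef_conjTranspose_mul_self X with hNdef
  set H := hN.sqrt with hHdef
  have hH : H.PosSemidef := hN.posSemidef_sqrt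
  have hX : Xᴴ * X = H * H := hN.sqrt_mul_self.symm
  set Ω := polarIso hH X with hΩdef
  have hrec : Ω * H = X := polarIso_mul_H hH hX
  have hK : (Ω * H * Ωᴴ).PosSemidef := hH.mul_mul_conjTranspose_same Ω
  have hsq : (Ω * H * Ωᴴ) ^ 2 = X * Xᴴ := by
    rw [pow_two]
    have : Ω * H * Ωᴴ * (Ω * H * Ωᴴ) = Ω * (H * (Ωᴴ * Ω) * H) * Ωᴴ := by
      simp only [Matrix.mul_assoc]
    rw [this, polarIso_conjTranspose_mul_self hH hX, H_mul_ind hH]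
    have h2 : Ω * (H * H) * Ωᴴ = (Ω * H) * (Ω * H)ᴴ := by
      rw [conjTranspose_mul, hH.1.eq]
      simp only [Matrix.mul_assoc]
    rw [h2, hrec]
  have heq := hK.eq_sqrt_of_sq_eq (posSemidef_self_mul_conjTranspose X) hsq
  rw [← heq, Matrix.trace_mul_cycle, polarIso_conjTranspose_mul_self hH hX, ind_mul_H hH]

end Uhlmann

namespace Uhlmann

lemma sqrt_add_le' {a b : ℝ} (ha : 0 ≤ a) (hb : 0 ≤ b) :
    Real.sqrt (a + b) ≤ Real.sqrt a + Real.sqrt b := by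
  have h := Real.sqrt_le_sqrt (show a + b ≤ (Real.sqrt a + Real.sqrt b) ^ 2 by
    nlinarith [Real.sq_sqrt ha, Real.sq_sqrt hb, Real.sqrt_nonneg a, Real.sqrt_nonneg b])
  rwa [Real.sqrt_sq (by positivity)] at h

variable {n : Type*} [Fintype n] [DecidableEq n]

lemma trace_sqrt_mono {A B : Matrix n n ℂ} (hA : A.PosSemidef) (hB : B.PosSemidef)
    (hAB : (B - A).PosSemidef) : hA.sqrt.trace.re ≤ hB.sqrt.trace.re := by
  refine le_of_forall_pos_le_add (fun ε hε => ?_)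
  set c : ℝ := (Fintype.card n : ℝ) + 1 with hc
  have hcpos : 0 < c := by positivity
  set δ : ℝ := (ε / c) ^ 2 with hδ
  have hδpos : 0 < δ := by positivity
  have heig : ∀ i, 0 ≤ hB.1.eigenvalues i := hB.eigenvalues_nonneg
  have hpos : ∀ i, 0 < hB.1.eigenvalues i + δ := fun i => by linarith [heig i]
  set Z := fc hB.1 (fun x => Real.sqrt (x + δ)) with hZ
  set Zh := fc hB.1 (fun x => Real.sqrt (Real.sqrt (x + δ))) with hZh
  set Zih := fc hB.1 (fun x => (Real.sqrt (Real.sqrt (x + δ)))⁻¹) with hZih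
  set Zi := fc hB.1 (fun x => (Real.sqrt (x + δ))⁻¹) with hZi
  have hsqrtpos : ∀ i, 0 < Real.sqrt (Real.sqrt (hB.1.eigenvalues i + δ)) := fun i =>
    Real.sqrt_pos.2 (Real.sqrt_pos.2 (hpos i))
  have hZihZh : Zih * Zh = 1 := by
    rw [hZih, hZh, fc_mul_fc, show fc hB.1 (fun x => (Real.sqrt (Real.sqrt (x + δ)))⁻¹ *
        Real.sqrt (Real.sqrt (x + δ))) = fc hB.1 (fun _ => 1) from
      fc_congr _ (fun i => inv_mul_cancel₀ (ne_of_gt (hsqrtpos i))), fc_one]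
  have hZhZih : Zh * Zih = 1 := by
    rw [hZih, hZh, fc_mul_fc, show fc hB.1 (fun x => Real.sqrt (Real.sqrt (x + δ)) *
        (Real.sqrt (Real.sqrt (x + δ)))⁻¹) = fc hB.1 (fun _ => 1) from
      fc_congr _ (fun i => mul_inv_cancel₀ (ne_of_gt (hsqrtpos i))), fc_one]
  have hZihZih : Zih * Zih = Zi := by
    rw [hZih, fc_mul_fc, hZi]
    exact fc_congr _ (fun i => by
      rw [← mul_inv, Real.mul_self_sqrt (Real.sqrt_nonneg _)])
  have hZhZh : Zh * Zh = Z := by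
    rw [hZh, fc_mul_fc, hZ]
    exact fc_congr _ (fun i => Real.mul_self_sqrt (Real.sqrt_nonneg _))
  set SA := hA.sqrt with hSA
  have hSAps : SA.PosSemidef := hA.posSemidef_sqrt
  have hSAherm : SAᴴ = SA := hSAps.1.eq
  set X := Zih * SA - Zh with hXdef
  have hXX : Xᴴ * X = SA * Zi * SA - SA - SA + Z := by
    have hXconj : Xᴴ = SA * Zih - Zh := by
      rw [hXdef, conjTranspose_sub, conjTranspose_mul, hSAherm, fc_conjTranspose,
        fc_conjTranspose]
    rw [hXconj, hXdef]
    rw [Matrix.sub_mul, Matrix.mul_sub, Matrix.mul_sub]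
    rw [show SA * Zih * (Zih * SA) = SA * (Zih * Zih) * SA from by simp only [Matrix.mul_assoc],
      hZihZih]
    rw [show SA * Zih * Zh = SA * (Zih * Zh) from by simp only [Matrix.mul_assoc], hZihZh,
      Matrix.mul_one]
    rw [show Zh * (Zih * SA) = (Zh * Zih) * SA from by simp only [Matrix.mul_assoc], hZhZih,
      Matrix.one_mul, hZhZh]
    abel
  have htr0 : 0 ≤ (Xᴴ * X).trace.re := trace_re_nonneg (posSemidef_conjTranspose_mul_self X)
  rw [hXX] at htr0
  have htr1 : (SA * Zi * SA).trace = (A * Zi).trace := by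
    rw [Matrix.trace_mul_cycle SA Zi SA, hSA, hA.sqrt_mul_self]
  -- T := B + δ
  set T := fc hB.1 (fun x => x + δ) with hT
  have hTA : (T - A).PosSemidef := by
    have hTB : T - B = fc hB.1 (fun _ => δ) := by
      have h := fc_sub hB.1 (fun x => x + δ) (fun x => x)
      rw [fc_id hB.1] at h
      rw [hT, h]
      exact fc_congr _ (fun i => by ring)
    have h1 : (T - B).PosSemidef := by
      rw [hTB]; exact fc_posSemidef _ (fun i => le_of_lt hδpos)
    have h2 := h1.add hAB
    rwa [show T - B + (B - A) = T - A from by abel] at h2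
  have hZips : Zi.PosSemidef := fc_posSemidef _ (fun i => by positivity)
  have htr2 : (A * Zi).trace.re ≤ (T * Zi).trace.re := by
    have h0 := trace_mul_psd_re_nonneg hTA hZips
    rw [Matrix.sub_mul, Matrix.trace_sub] at h0
    simp only [Complex.sub_re] at h0
    linarith
  have htr3 : (T * Zi).trace = Z.trace := by
    rw [hT, hZi, fc_mul_fc, hZ]
    exact congrArg Matrix.trace (fc_congr _ (fun i => by
      rw [show hB.1.eigenvalues i + δ = Real.sqrt (hB.1.eigenvalues i + δ) *
        Real.sqrt (hB.1.eigenvalues i + δ) from (Real.mul_self_sqrt (le_of_lt (hpos i))).symm]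
      field_simp
      rw [Real.sqrt_sq (Real.sqrt_nonneg _), pow_two, mul_div_assoc,
        div_self (ne_of_gt (Real.sqrt_pos.2 (hpos i))), mul_one]))
  have hmain : SA.trace.re ≤ Z.trace.re := by
    have e1 : (SA * Zi * SA - SA - SA + Z).trace.re
        = (A * Zi).trace.re - 2 * SA.trace.re + Z.trace.re := by
      rw [Matrix.trace_add, Matrix.trace_sub, Matrix.trace_sub, htr1]
      simp only [Complex.add_re, Complex.sub_re]
      ring
    rw [e1] at htr0
    have := htr2
    rw [htr3] at this
    linarith
  -- now estimate Z.trace.re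
  have hZtr : Z.trace.re = ∑ i, Real.sqrt (hB.1.eigenvalues i + δ) := by
    rw [hZ, fc_trace]
    simp [Complex.re_sum]
  have hBtr : hB.sqrt.trace.re = ∑ i, Real.sqrt (hB.1.eigenvalues i) := by
    rw [fc_sqrt_eq hB, fc_trace]
    simp [Complex.re_sum]
  have hsum : ∑ i, Real.sqrt (hB.1.eigenvalues i + δ)
      ≤ ∑ i, (Real.sqrt (hB.1.eigenvalues i) + Real.sqrt δ) :=
    Finset.sum_le_sum (fun i _ => sqrt_add_le' (heig i) (le_of_lt hδpos))
  have hsqδ : Real.sqrt δ = ε / c := by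
    rw [hδ, Real.sqrt_sq (by positivity)]
  have hfin : Z.trace.re ≤ hB.sqrt.trace.re + ε := by
    rw [hZtr, hBtr]
    calc ∑ i, Real.sqrt (hB.1.eigenvalues i + δ)
        ≤ ∑ i, (Real.sqrt (hB.1.eigenvalues i) + Real.sqrt δ) := hsum
      _ = (∑ i, Real.sqrt (hB.1.eigenvalues i)) + (Fintype.card n : ℝ) * (ε / c) := by
          rw [Finset.sum_add_distrib, hsqδ]
          simp [Finset.card_univ, mul_comm]
      _ ≤ (∑ i, Real.sqrt (hB.1.eigenvalues i)) + ε := by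
          have : (Fintype.card n : ℝ) * (ε / c) ≤ ε := by
            rw [hc]
            rw [div_eq_mul_inv, ← mul_assoc]
            rw [mul_comm (Fintype.card n : ℝ) ε, mul_assoc]
            have h2 : (Fintype.card n : ℝ) * ((Fintype.card n : ℝ) + 1)⁻¹ ≤ 1 := by
              rw [mul_inv_le_iff₀ (by positivity), one_mul]
              linarith
            nlinarith [le_of_lt hε]
          linarith
  linarith

end Uhlmann

namespace Uhlmann

lemma sqrt_eq_of_eq {n : Type*} [Fintype n] [DecidableEq n] {A B : Matrix n n ℂ}
    (hA : A.PosSemidef) (hB : B.PosSemidef) (h : A = B) : hA.sqrt = hB.sqrt := by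
  subst h; rfl

lemma overlap_le {κ r : Type*} [Fintype κ] [DecidableEq κ] [Fintype r] [DecidableEq r]
    (R N : Matrix κ r ℂ) {Pm : Matrix r r ℂ} (hPm : Pm.PosSemidef)
    (hsub : (Pm - Rᴴ * R).PosSemidef) :
    ‖(Nᴴ * R).trace‖ ≤
      ((posSemidef_conjTranspose_mul_self
        (hPm.sqrt * (posSemidef_conjTranspose_mul_self N).sqrt)).sqrt).trace.re := by
  set hQ := posSemidef_conjTranspose_mul_self N with hQdef
  set HQ := hQ.sqrt with hHQ
  have hHQps : HQ.PosSemidef := hQ.posSemidef_sqrt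
  have hXN : Nᴴ * N = HQ * HQ := hQ.sqrt_mul_self.symm
  set hρ := posSemidef_conjTranspose_mul_self R with hρdef
  set Hρ := hρ.sqrt with hHρ
  have hHρps : Hρ.PosSemidef := hρ.posSemidef_sqrt
  have hXR : Rᴴ * R = Hρ * Hρ := hρ.sqrt_mul_self.symm
  set ΩN := polarIso hHQps N with hΩN
  set ΩR := polarIso hHρps R with hΩR
  have hNfact : ΩN * HQ = N := polarIso_mul_H hHQps hXN
  have hRfact : ΩR * Hρ = R := polarIso_mul_H hHρps hXR
  set K := ΩRᴴ * ΩN with hKdef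
  set M0 := Hρ * HQ with hM0
  -- rewrite the trace
  have htr : (Nᴴ * R).trace = (Kᴴ * M0).trace := by
    rw [← hNfact, ← hRfact, hKdef, hM0]
    rw [conjTranspose_mul, hHQps.1.eq, conjTranspose_mul, conjTranspose_conjTranspose]
    rw [show HQ * ΩNᴴ * (ΩR * Hρ) = HQ * (ΩNᴴ * (ΩR * Hρ)) from by simp only [Matrix.mul_assoc]]
    rw [Matrix.trace_mul_comm]
    congr 1
    simp only [Matrix.mul_assoc]
  -- K is a contraction
  have hflip : ((1 : Matrix κ κ ℂ) - ΩN * ΩNᴴ).PosSemidef := by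
    refine contract_flip ?_
    rw [hΩN, polarIso_conjTranspose_mul_self hHQps hXN]
    exact fc_ind_le_one hHQps
  have h2 : (ΩRᴴ * ((1 : Matrix κ κ ℂ) - ΩN * ΩNᴴ) * ΩR).PosSemidef :=
    hflip.conjTranspose_mul_mul_same ΩR
  have h2e : ΩRᴴ * ((1 : Matrix κ κ ℂ) - ΩN * ΩNᴴ) * ΩR = ΩRᴴ * ΩR - K * Kᴴ := by
    rw [hKdef, Matrix.mul_sub, Matrix.mul_one, Matrix.sub_mul, conjTranspose_mul,
      conjTranspose_conjTranspose]
    simp only [Matrix.mul_assoc]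
  rw [h2e] at h2
  have hcontr : ((1 : Matrix r r ℂ) - K * Kᴴ).PosSemidef := by
    have h4 : ((1 : Matrix r r ℂ) - ΩRᴴ * ΩR).PosSemidef := by
      rw [hΩR, polarIso_conjTranspose_mul_self hHρps hXR]
      exact fc_ind_le_one hHρps
    have h5 := h4.add h2
    rwa [show (1 : Matrix r r ℂ) - ΩRᴴ * ΩR + (ΩRᴴ * ΩR - K * Kᴴ) = 1 - K * Kᴴ from by abel]
      at h5
  -- Hölder
  have hH := hoelder (K := K) (M := M0) hcontr
  rw [htr]
  refine le_trans hH ?_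
  -- monotonicity
  set SPm := hPm.sqrt with hSPm
  have hSPmps : SPm.PosSemidef := hPm.posSemidef_sqrt
  have hA0e : M0ᴴ * M0 = HQ * (Rᴴ * R) * HQ := by
    rw [hM0, conjTranspose_mul, hHQps.1.eq, hHρps.1.eq, hXR]
    simp only [Matrix.mul_assoc]
  have hB0e : (SPm * HQ)ᴴ * (SPm * HQ) = HQ * Pm * HQ := by
    rw [conjTranspose_mul, hHQps.1.eq, hSPmps.1.eq]
    rw [show HQ * SPm * (SPm * HQ) = HQ * (SPm * SPm) * HQ from by simp only [Matrix.mul_assoc],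
      hSPm, hPm.sqrt_mul_self]
  have hdiff : ((SPm * HQ)ᴴ * (SPm * HQ) - M0ᴴ * M0).PosSemidef := by
    rw [hA0e, hB0e]
    rw [show HQ * Pm * HQ - HQ * (Rᴴ * R) * HQ = HQ * (Pm - Rᴴ * R) * HQ from by
      rw [Matrix.mul_sub, Matrix.sub_mul]]
    have := hsub.conjTranspose_mul_mul_same HQ
    rwa [hHQps.1.eq] at this
  exact trace_sqrt_mono (posSemidef_conjTranspose_mul_self M0)
    (posSemidef_conjTranspose_mul_self (SPm * HQ)) hdiff

end Uhlmann

namespace Uhlmann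

lemma trace_outer_outer {ι : Type*} [Fintype ι] [DecidableEq ι] (x w : ι → ℂ) :
    ((vecMulVec x (star x))ᴴ * vecMulVec w (star w)).trace
      = star (∑ p, x p * star (w p)) * (∑ p, x p * star (w p)) := by
  have h1 : ∀ p q : ι, star ((vecMulVec x (star x)) q p) * (vecMulVec w (star w)) q p
      = (star (x q) * w q) * (x p * star (w p)) := by
    intro p q
    simp only [Matrix.vecMulVec_apply, Pi.star_apply, star_mul', star_star]
    ring
  have h2 : ((vecMulVec x (star x))ᴴ * vecMulVec w (star w)).trace
      = ∑ p, ∑ q, star ((vecMulVec x (star x)) q p) * (vecMulVec w (star w)) q p := by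
    simp only [Matrix.trace, Matrix.diag, Matrix.mul_apply, Matrix.conjTranspose_apply]
  rw [h2]
  have h3 : ∀ p : ι, ∑ q, star ((vecMulVec x (star x)) q p) * (vecMulVec w (star w)) q p
      = (∑ q, star (x q) * w q) * (x p * star (w p)) := by
    intro p
    rw [Finset.sum_mul]
    exact Finset.sum_congr rfl (fun q _ => h1 p q)
  rw [Finset.sum_congr rfl (fun p _ => h3 p), ← Finset.mul_sum]
  congr 1
  rw [star_sum]
  exact Finset.sum_congr rfl (fun p _ => by rw [star_mul', star_star, mul_comm])

lemma trace_outer_W {ι : Type*} [Fintype ι] [DecidableEq ι] (x : ι → ℂ) (W : Matrix ι ι ℂ) :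
    ((vecMulVec x (star x))ᴴ * W).trace = dotProduct (star x) (W *ᵥ x) := by
  have h2 : ((vecMulVec x (star x))ᴴ * W).trace
      = ∑ p, ∑ q, star ((vecMulVec x (star x)) q p) * W q p := by
    simp only [Matrix.trace, Matrix.diag, Matrix.mul_apply, Matrix.conjTranspose_apply]
  rw [h2, Finset.sum_comm]
  simp only [dotProduct, Matrix.mulVec, Pi.star_apply, Finset.mul_sum]
  refine Finset.sum_congr rfl (fun q _ => ?_)
  refine Finset.sum_congr rfl (fun p _ => ?_)
  simp only [Matrix.vecMulVec_apply, Pi.star_apply, star_mul', star_star]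
  ring

end Uhlmann

open Uhlmann in
/-- SDP form of Uhlmann's theorem. -/
theorem uhlmann_sdp {m r : ℕ} (u v : Fin m × Fin r → ℂ) :
    IsGreatest {x : ℝ | ∃ W : Matrix (Fin m × Fin r) (Fin m × Fin r) ℂ,
        W.PosSemidef ∧
        (ptraceFst (vecMulVec u (star u)) - ptraceFst W).PosSemidef ∧
        x = ((vecMulVec v (star v))ᴴ * W).trace.re}
      (fidelity (ptraceFst (vecMulVec u (star u)))
        (ptraceFst (vecMulVec v (star v))) ^ 2) := by
  classical
  set P : Matrix (Fin r) (Fin r) ℂ := ptraceFst (vecMulVec u (star u)) with hPdef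
  set Q : Matrix (Fin r) (Fin r) ℂ := ptraceFst (vecMulVec v (star v)) with hQdef
  set Bu : Matrix (Fin m) (Fin r) ℂ := Matrix.of (fun i a => star (u (i, a))) with hBu
  set Cv : Matrix (Fin m) (Fin r) ℂ := Matrix.of (fun i a => star (v (i, a))) with hCv
  have hPB : P = Buᴴ * Bu := by
    ext a b
    simp only [hPdef, ptraceFst, Matrix.of_apply, Matrix.vecMulVec_apply, Matrix.mul_apply,
      Matrix.conjTranspose_apply, hBu, Pi.star_apply, star_star]
  have hQC : Q = Cvᴴ * Cv := by
    ext a b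
    simp only [hQdef, ptraceFst, Matrix.of_apply, Matrix.vecMulVec_apply, Matrix.mul_apply,
      Matrix.conjTranspose_apply, hCv, Pi.star_apply, star_star]
  have hP : P.PosSemidef := by rw [hPB]; exact posSemidef_conjTranspose_mul_self Bu
  have hQ : Q.PosSemidef := by rw [hQC]; exact posSemidef_conjTranspose_mul_self Cv
  set SP := hP.sqrt with hSP
  set SQ := hQ.sqrt with hSQ
  have hSPps : SP.PosSemidef := hP.posSemidef_sqrt
  have hSQps : SQ.PosSemidef := hQ.posSemidef_sqrt
  set M := Cv * SP with hM
  set hMM := posSemidef_conjTranspose_mul_self M with hMMdef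
  set HM := hMM.sqrt with hHM
  have hHMps : HM.PosSemidef := hMM.posSemidef_sqrt
  have hXM : Mᴴ * M = HM * HM := hMM.sqrt_mul_self.symm
  have hMMe : Mᴴ * M = (SQ * SP)ᴴ * (SQ * SP) := by
    rw [hM, conjTranspose_mul, conjTranspose_mul, hSPps.1.eq, hSQps.1.eq]
    rw [show SP * Cvᴴ * (Cv * SP) = SP * (Cvᴴ * Cv) * SP from by simp only [Matrix.mul_assoc],
      show SP * SQ * (SQ * SP) = SP * (SQ * SQ) * SP from by simp only [Matrix.mul_assoc],
      hSQ, hQ.sqrt_mul_self, ← hQC]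
  have hPP : (SP * SQ)ᴴ * (SP * SQ) = (SQ * SP) * (SQ * SP)ᴴ := by
    rw [Matrix.conjTranspose_mul SP SQ, Matrix.conjTranspose_mul SQ SP, hSPps.1.eq, hSQps.1.eq]
  have hfid0 : fidelity P Q = ((posSemidef_conjTranspose_mul_self (SP * SQ)).sqrt).trace.re := by
    rw [fidelity, show matSqrt P = SP from by rw [matSqrt, dif_pos hP],
      show matSqrt Q = SQ from by rw [matSqrt, dif_pos hQ]]
    rfl
  have hfid : fidelity P Q = HM.trace.re := by
    rw [hfid0,
      sqrt_eq_of_eq (posSemidef_conjTranspose_mul_self (SP * SQ))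
        (posSemidef_self_mul_conjTranspose (SQ * SP)) hPP,
      ← trace_sqrt_swap (SQ * SP),
      sqrt_eq_of_eq (posSemidef_conjTranspose_mul_self (SQ * SP)) hMM hMMe.symm]
  constructor
  · -- achievability
    set Ω := polarIso hHMps M with hΩ
    set D := Ω * SP with hD
    set w : Fin m × Fin r → ℂ := fun p => star (D p.1 p.2) with hw
    refine ⟨vecMulVec w (star w), ?_, ?_, ?_⟩
    · rw [Matrix.vecMulVec_eq (Fin 1),
        show Matrix.replicateRow (Fin 1) (star w) = (Matrix.replicateCol (Fin 1) w)ᴴ from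
          (Matrix.conjTranspose_replicateCol w).symm]
      exact posSemidef_self_mul_conjTranspose _
    · have hptr : ptraceFst (vecMulVec w (star w)) = Dᴴ * D := by
        ext a b
        simp only [ptraceFst, Matrix.of_apply, Matrix.vecMulVec_apply, Matrix.mul_apply,
          Matrix.conjTranspose_apply, hw, Pi.star_apply, star_star]
      rw [hptr]
      have hDD : Dᴴ * D = SP * (Ωᴴ * Ω) * SP := by
        rw [hD, conjTranspose_mul, hSPps.1.eq]
        simp only [Matrix.mul_assoc]
      rw [hDD]
      have h1 : ((1 : Matrix (Fin r) (Fin r) ℂ) - Ωᴴ * Ω).PosSemidef := by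
        rw [hΩ, polarIso_conjTranspose_mul_self hHMps hXM]
        exact fc_ind_le_one hHMps
      have h2 := h1.conjTranspose_mul_mul_same SP
      rw [hSPps.1.eq] at h2
      rwa [show SP * ((1 : Matrix (Fin r) (Fin r) ℂ) - Ωᴴ * Ω) * SP
          = P - SP * (Ωᴴ * Ω) * SP from by
        rw [Matrix.mul_sub, Matrix.mul_one, Matrix.sub_mul,
          show SP * SP = P from hP.sqrt_mul_self]] at h2
    · set s : ℂ := ∑ p, v p * star (w p) with hs
      have htr := trace_outer_outer v w
      have hsD : s = (Cvᴴ * D).trace := by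
        rw [hs]
        simp only [Matrix.trace, Matrix.diag, Matrix.mul_apply, Matrix.conjTranspose_apply,
          hCv, Matrix.of_apply, star_star, hw, Pi.star_apply]
        rw [Fintype.sum_prod_type, Finset.sum_comm]
      have hsH : (Cvᴴ * D).trace = HM.trace := by
        rw [hD, show Cvᴴ * (Ω * SP) = Cvᴴ * Ω * SP from (Matrix.mul_assoc _ _ _).symm,
          Matrix.trace_mul_cycle,
          show SP * Cvᴴ = Mᴴ from by rw [hM, conjTranspose_mul, hSPps.1.eq],
          show Mᴴ * Ω = (Ωᴴ * M)ᴴ from by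
            rw [Matrix.conjTranspose_mul Ωᴴ M, conjTranspose_conjTranspose],
          Matrix.trace_conjTranspose, hΩ, polarIso_conjTranspose_mul_X hHMps hXM]
        exact Complex.conj_eq_iff_im.2 (trace_im_zero hHMps.1)
      have hsHM : s = HM.trace := hsD.trans hsH
      have him : s.im = 0 := by rw [hsHM]; exact trace_im_zero hHMps.1
      rw [htr, hfid]
      have : (star s * s).re = s.re * s.re := by
        simp [Complex.mul_re, him]
      rw [this, hsHM]
      ring
  · -- upper bound
    rintro x ⟨W, hWps, hWsub, rfl⟩
    rw [trace_outer_W v W]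
    set SW := hWps.sqrt with hSW
    have hSWps : SW.PosSemidef := hWps.posSemidef_sqrt
    set y := SW *ᵥ v with hy
    have hqf : dotProduct (star y) y = dotProduct (star v) (W *ᵥ v) := by
      rw [hy, Matrix.star_mulVec, hSWps.1.eq, ← dotProduct_mulVec,
        Matrix.mulVec_mulVec, show SW * SW = W from hWps.sqrt_mul_self]
    have h0 : dotProduct (star y) y = ((∑ i, Complex.normSq (y i) : ℝ) : ℂ) := by
      rw [dotProduct]
      rw [show ((∑ i, Complex.normSq (y i) : ℝ) : ℂ) = ∑ i, ((Complex.normSq (y i) : ℝ) : ℂ) by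
        push_cast; ring]
      refine Finset.sum_congr rfl (fun i _ => ?_)
      rw [Pi.star_apply, Complex.star_def, mul_comm, Complex.mul_conj]
    set b : ℝ := ∑ i, Complex.normSq (y i) with hb
    have hbeq : dotProduct (star y) y = (b : ℂ) := h0
    have hbnn : 0 ≤ b := Finset.sum_nonneg (fun i _ => Complex.normSq_nonneg _)
    rw [← hqf]
    by_cases hb0 : b = 0
    · rw [hbeq, hb0]
      simpa using sq_nonneg (fidelity P Q)
    · have hbpos : 0 < b := lt_of_le_of_ne hbnn (Ne.symm hb0)
      set c : ℝ := (Real.sqrt b)⁻¹ with hc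
      have hsqb : Real.sqrt b * Real.sqrt b = b := Real.mul_self_sqrt hbnn
      have hsqbpos : 0 < Real.sqrt b := Real.sqrt_pos.2 hbpos
      set R : Matrix ((Fin m × Fin r) × Fin m) (Fin r) ℂ :=
        Matrix.of (fun pi a => SW pi.1 (pi.2, a)) with hR
      set Nb : Matrix ((Fin m × Fin r) × Fin m) (Fin r) ℂ :=
        Matrix.of (fun pi a => (c : ℂ) * y pi.1 * star (v (pi.2, a))) with hNb
      have hherm : ∀ q p, SW q p = star (SW p q) := by
        intro q p
        nth_rewrite 1 [← hSWps.1.eq]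
        rfl
      have hRR : Rᴴ * R = ptraceFst W := by
        ext a b'
        simp only [Matrix.mul_apply, Matrix.conjTranspose_apply, hR, Matrix.of_apply, ptraceFst]
        rw [Fintype.sum_prod_type, Finset.sum_comm]
        refine Finset.sum_congr rfl (fun i _ => ?_)
        rw [show W = SW * SW from (hWps.sqrt_mul_self).symm, Matrix.mul_apply]
        refine Finset.sum_congr rfl (fun p _ => ?_)
        rw [hherm (i, a) p]
      have hsubR : (P - Rᴴ * R).PosSemidef := by rw [hRR]; exact hWsub
      have hNN : Nbᴴ * Nb = Q := by
        ext a b'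
        simp only [Matrix.mul_apply, Matrix.conjTranspose_apply, hNb, Matrix.of_apply,
          hQdef, ptraceFst]
        rw [Fintype.sum_prod_type, Finset.sum_comm]
        have hcbc : ((c : ℂ) * (c : ℂ)) * (b : ℂ) = 1 := by
          have hr : (c * c) * b = 1 := by
            rw [hc, ← mul_inv, hsqb]
            field_simp
          calc ((c : ℂ) * (c : ℂ)) * (b : ℂ) = ((c * c * b : ℝ) : ℂ) := by push_cast; ring
          _ = 1 := by rw [hr]; norm_num
        calc ∑ i, ∑ p, star ((c : ℂ) * y p * star (v (i, a))) * ((c : ℂ) * y p * star (v (i, b')))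
            = ∑ i, (∑ p, star (y p) * y p) * ((c:ℂ) * (c:ℂ) * (v (i, a) * star (v (i, b')))) := by
              refine Finset.sum_congr rfl (fun i _ => ?_)
              rw [Finset.sum_mul]
              refine Finset.sum_congr rfl (fun p _ => ?_)
              simp only [star_mul', star_star, Complex.star_def, Complex.conj_ofReal, Complex.conj_conj]
              ring
          _ = ∑ i, v (i, a) * star (v (i, b')) := by
              refine Finset.sum_congr rfl (fun i _ => ?_)
              rw [show (∑ p, star (y p) * y p) = dotProduct (star y) y from rfl, hbeq]
              rw [show (b:ℂ) * ((c:ℂ) * (c:ℂ) * (v (i, a) * star (v (i, b'))))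
                = (((c:ℂ) * (c:ℂ)) * (b:ℂ)) * (v (i, a) * star (v (i, b'))) from by ring, hcbc,
                one_mul]
          _ = _ := rfl
      have htrNb : (Nbᴴ * R).trace = ((Real.sqrt b : ℝ) : ℂ) := by
        simp only [Matrix.trace, Matrix.diag, Matrix.mul_apply, Matrix.conjTranspose_apply,
          hNb, hR, Matrix.of_apply]
        rw [Finset.sum_comm]
        calc ∑ pi : (Fin m × Fin r) × Fin m, ∑ a, star ((c : ℂ) * y pi.1 * star (v (pi.2, a)))
              * SW pi.1 (pi.2, a)
            = ∑ p : Fin m × Fin r, (c : ℂ) * (star (y p) * ∑ i, ∑ a, SW p (i, a) * v (i, a)) := by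
              rw [Fintype.sum_prod_type]
              refine Finset.sum_congr rfl (fun p _ => ?_)
              rw [Finset.mul_sum, Finset.mul_sum]
              refine Finset.sum_congr rfl (fun i _ => ?_)
              rw [Finset.mul_sum, Finset.mul_sum]
              refine Finset.sum_congr rfl (fun a _ => ?_)
              simp only [star_mul', star_star, Complex.star_def, Complex.conj_ofReal, Complex.conj_conj]
              ring
          _ = ∑ p : Fin m × Fin r, (c : ℂ) * (star (y p) * y p) := by
              refine Finset.sum_congr rfl (fun p _ => ?_)
              have hyp : (∑ i, ∑ a, SW p (i, a) * v (i, a)) = y p := by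
                rw [hy]
                simp only [Matrix.mulVec, dotProduct]
                rw [Fintype.sum_prod_type]
              rw [hyp]
          _ = (c : ℂ) * (b : ℂ) := by
              rw [← Finset.mul_sum,
                show (∑ p, star (y p) * y p) = dotProduct (star y) y from rfl, hbeq]
          _ = ((Real.sqrt b : ℝ) : ℂ) := by
              rw [hc]
              push_cast
              rw [show (b:ℂ) = (Real.sqrt b : ℂ) * (Real.sqrt b : ℂ) from by
                rw [← Complex.ofReal_mul, hsqb]]
              rw [← mul_assoc]
              rw [inv_mul_cancel₀ (by exact_mod_cast ne_of_gt hsqbpos), one_mul]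
      have hover := overlap_le R Nb hP hsubR
      rw [htrNb] at hover
      have habs : ‖((Real.sqrt b : ℝ) : ℂ)‖ = Real.sqrt b := by
        rw [Complex.norm_real, Real.norm_eq_abs, abs_of_pos hsqbpos]
      rw [habs] at hover
      have hSQe : (posSemidef_conjTranspose_mul_self Nb).sqrt = SQ :=
        sqrt_eq_of_eq (posSemidef_conjTranspose_mul_self Nb) hQ hNN
      rw [hSQe] at hover
      -- hover : √b ≤ ((psd (hP.sqrt * SQ)).sqrt).trace.re
      have hfidb : Real.sqrt b ≤ fidelity P Q := by
        rw [hfid0]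
        exact hover
      rw [hbeq]
      have : ((b : ℝ) : ℂ).re = b := by simp
      rw [this]
      calc b = Real.sqrt b * Real.sqrt b := hsqb.symm
        _ ≤ fidelity P Q * fidelity P Q :=
            mul_le_mul hfidb hfidb (le_of_lt hsqbpos) (le_trans (le_of_lt hsqbpos) hfidb)
        _ = fidelity P Q ^ 2 := (sq (fidelity P Q)).symm


end
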